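/- Let f : X → X be a continuous map of a Polish metric space X. If f is point transitive (some point has dense orbit), f is not minimal, and the set of minimal points is dense in X, then f is sensitive: there exists ε > 0 such that for all x ∈ X and δ > 0 there exist y ∈ B(x,δ) and n ∈ ℕ with d(f^n(x), f^n(y)) > ε. -/

import Mathlib

def mapOrbit {X : Type*} (f : X → X) (x : X) : Set X :=
  Set.range fun n : ℕ => f^[n] x

def IsMinimalPoint {X : Type*} [MetricSpace X] (f : X → X) (x : X) : Prop :=
  IsCompact (closure (mapOrbit f x)) ∧
    ∀ y ∈ closure (mapOrbit f x),
      closure (mapOrbit f y) = closure (mapOrbit f x)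

open Metric Function

lemma mem_mapOrbit {X : Type*} (f : X → X) (x : X) (n : ℕ) :
    f^[n] x ∈ mapOrbit f x := ⟨n, rfl⟩

lemma minimal_recurrent {X : Type*} [MetricSpace X] {f : X → X} {q : X}
    (hq : IsMinimalPoint f q) : q ∈ closure (mapOrbit f (f q)) := by
  have h1 : f q ∈ closure (mapOrbit f q) := subset_closure ⟨1, by simp⟩
  rw [hq.2 (f q) h1]
  exact subset_closure (mem_mapOrbit f q 0)

/-- Syndetic returns of a minimal point to its own ε-neighborhood. -/
lemma syndetic_return {X : Type*} [MetricSpace X] {f : X → X} (hf : Continuous f)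
    {p : X} (hp : IsMinimalPoint f p) {ε : ℝ} (hε : 0 < ε) :
    ∃ K : ℕ, ∀ m : ℕ, ∃ j ≤ K, dist (f^[j] (f^[m] p)) p < ε := by
  have hcover : closure (mapOrbit f p) ⊆ ⋃ j : ℕ, (fun z => f^[j] z) ⁻¹' ball p ε := by
    intro z hz
    have hpz : p ∈ closure (mapOrbit f z) := by
      rw [hp.2 z hz]; exact subset_closure (mem_mapOrbit f p 0)
    obtain ⟨w, hw1, n, rfl⟩ :=
      _root_.mem_closure_iff.mp hpz (ball p ε) isOpen_ball (mem_ball_self hε)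
    exact Set.mem_iUnion.mpr ⟨n, hw1⟩
  obtain ⟨s, hs⟩ := hp.1.elim_finite_subcover (fun j => (fun z => f^[j] z) ⁻¹' ball p ε)
    (fun j => (isOpen_ball).preimage (hf.iterate j)) hcover
  refine ⟨s.sup id, fun m => ?_⟩
  have hmem : f^[m] p ∈ closure (mapOrbit f p) := subset_closure (mem_mapOrbit f p m)
  obtain ⟨j, hjs, hjmem⟩ := Set.mem_iUnion₂.mp (hs hmem)
  exact ⟨j, Finset.le_sup (f := id) hjs, mem_ball.mp hjmem⟩

/-- From a point with dense orbit, one can enter any open set containing a minimal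
point, starting from any ball. -/
lemma transitive_hit {X : Type*} [MetricSpace X] {f : X → X} {t q : X}
    (ht : Dense (mapOrbit f t)) (hq : IsMinimalPoint f q)
    {V : Set X} (hVopen : IsOpen V) (hqV : q ∈ V) (x : X) {δ : ℝ} (hδ : 0 < δ) :
    ∃ y, dist y x < δ ∧ ∃ k, f^[k] y ∈ V := by
  obtain ⟨w, ⟨a, rfl⟩, hwd⟩ := ht.exists_dist_lt x hδ
  set y : X := f^[a] t with hy
  have hydist : dist y x < δ := by rw [dist_comm]; exact hwd
  by_cases hc : (V ∩ closure (mapOrbit f y)).Nonempty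
  · obtain ⟨v, hvV, hvcl⟩ := hc
    obtain ⟨z, hzV, k, rfl⟩ := _root_.mem_closure_iff.mp hvcl V hVopen hvV
    exact ⟨y, hydist, k, hzV⟩
  · -- V misses the closure of the orbit of y; then V is contained in a finite
    -- set of initial orbit points, and q is an isolated periodic point.
    have hcempty : V ∩ closure (mapOrbit f y) = ∅ :=
      Set.not_nonempty_iff_eq_empty.mp hc
    set F : Set X := (fun i : ℕ => f^[i] t) '' (Set.Iio a) with hF
    have hFfin : F.Finite := (Set.finite_Iio a).image _
    have horb : mapOrbit f t ⊆ F ∪ mapOrbit f y := by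
      rintro w ⟨n, rfl⟩
      by_cases hn : n < a
      · exact Or.inl ⟨n, hn, rfl⟩
      · refine Or.inr ⟨n - a, ?_⟩
        show f^[n - a] (f^[a] t) = f^[n] t
        rw [← iterate_add_apply, Nat.sub_add_cancel (not_lt.mp hn)]
    have hVF : V ⊆ F := by
      intro v hvV
      have hv : v ∈ closure (mapOrbit f t) := ht v
      have : v ∈ closure (F ∪ mapOrbit f y) := closure_mono horb hv
      rw [closure_union, hFfin.isClosed.closure_eq] at this
      rcases this with h | h
      · exact h
      · exact absurd (Set.mem_inter hvV h) (by rw [hcempty]; exact Set.notMem_empty v)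
    -- q is isolated
    have hsing : ({q} : Set X) = V ∩ (F \ {q})ᶜ := by
      ext v
      constructor
      · rintro rfl
        exact ⟨hqV, fun h => h.2 rfl⟩
      · rintro ⟨hvV, hvc⟩
        by_contra hne
        exact hvc ⟨hVF hvV, fun h => hne h⟩
    have hopen : IsOpen ({q} : Set X) := by
      rw [hsing]
      exact hVopen.inter (hFfin.diff : (F \ {q}).Finite).isClosed.isOpen_compl
    -- q is periodic
    obtain ⟨z, hz1, m, hm⟩ :=
      _root_.mem_closure_iff.mp (minimal_recurrent hq) {q} hopen rfl
    have hzq : z = q := hz1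
    have hfix : f^[m + 1] q = q := by
      rw [iterate_add_apply, iterate_one]
      exact hm.trans hzq
    -- q lies in F
    obtain ⟨i, hia, hiq⟩ := hVF hqV
    refine ⟨y, hydist, i + a * m, ?_⟩
    have hkey : f^[i + a * m] y = q := by
      show f^[i + a * m] (f^[a] t) = q
      rw [← iterate_add_apply]
      have hidx : i + a * m + a = a * (m + 1) + i := by ring
      have hiq' : f^[i] t = q := hiq
      rw [hidx, iterate_add_apply, hiq', mul_comm, iterate_mul]
      exact iterate_fixed hfix a
    rw [hkey]; exact hqV

/-- Main separation step: if a minimal set generated by `q` is far from `x`,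
then points near `x` get separated under iteration. -/
lemma key_sep {X : Type*} [MetricSpace X] {f : X → X} (hf : Continuous f)
    {t q p x : X} {ε δ : ℝ} (ht : Dense (mapOrbit f t))
    (hq : IsMinimalPoint f q) (hp : IsMinimalPoint f p)
    (hε : 0 < ε) (hδ : 0 < δ) (hδε : δ ≤ ε)
    (hxq : 8 * ε ≤ infDist x (closure (mapOrbit f q)))
    (hxp : dist x p < δ) :
    ∃ y, dist y x < δ ∧ ∃ n : ℕ, 2 * ε < dist (f^[n] x) (f^[n] y) := by
  obtain ⟨K, hK⟩ := syndetic_return hf hp hε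
  set V : Set X := ⋂ j ∈ Finset.range (K + 1), (fun z => f^[j] z) ⁻¹' ball (f^[j] q) ε
    with hV
  have hVopen : IsOpen V :=
    isOpen_biInter_finset fun j _ => (isOpen_ball).preimage (hf.iterate j)
  have hqV : q ∈ V := by
    refine Set.mem_iInter₂.mpr fun j _ => ?_
    exact mem_ball_self hε
  obtain ⟨y, hyx, k, hkV⟩ := transitive_hit ht hq hVopen hqV x hδ
  obtain ⟨j, hjK, hjp⟩ := hK k
  set n := j + k with hn
  have hjq : dist (f^[j] (f^[k] y)) (f^[j] q) < ε :=
    Set.mem_iInter₂.mp hkV j (Finset.mem_range.mpr (Nat.lt_succ_of_le hjK))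
  have e1 : f^[j] (f^[k] y) = f^[n] y := (iterate_add_apply f j k y).symm
  have e2 : f^[j] (f^[k] p) = f^[n] p := (iterate_add_apply f j k p).symm
  have hjqmem : f^[j] q ∈ closure (mapOrbit f q) := subset_closure (mem_mapOrbit f q j)
  have h8 : 8 * ε ≤ dist x (f^[j] q) :=
    le_trans hxq (infDist_le_dist_of_mem hjqmem)
  have hA : dist p (f^[n] p) < ε := by
    rw [dist_comm, ← e2]; exact hjp
  have hB : dist (f^[n] y) (f^[j] q) < ε := by rw [← e1]; exact hjq
  have chain : dist x (f^[j] q) ≤ dist x p + dist p (f^[n] p) + dist (f^[n] p) (f^[n] x)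
      + dist (f^[n] x) (f^[n] y) + dist (f^[n] y) (f^[j] q) := by
    calc dist x (f^[j] q) ≤ dist x (f^[n] y) + dist (f^[n] y) (f^[j] q) := dist_triangle _ _ _
    _ ≤ (dist x (f^[n] x) + dist (f^[n] x) (f^[n] y)) + dist (f^[n] y) (f^[j] q) := by
        gcongr; exact dist_triangle _ _ _
    _ ≤ ((dist x (f^[n] p) + dist (f^[n] p) (f^[n] x)) + dist (f^[n] x) (f^[n] y))
        + dist (f^[n] y) (f^[j] q) := by gcongr; exact dist_triangle _ _ _
    _ ≤ (((dist x p + dist p (f^[n] p)) + dist (f^[n] p) (f^[n] x)) + dist (f^[n] x) (f^[n] y))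
        + dist (f^[n] y) (f^[j] q) := by gcongr; exact dist_triangle _ _ _
    _ = _ := by ring
  by_cases hcase : 2 * ε < dist (f^[n] x) (f^[n] y)
  · exact ⟨y, hyx, n, hcase⟩
  · push_neg at hcase
    refine ⟨p, by rw [dist_comm]; exact hxp, n, ?_⟩
    have h1 : 2 * ε < dist (f^[n] p) (f^[n] x) := by linarith
    rw [dist_comm] at h1
    exact h1

theorem stmt_7 {X : Type*} [MetricSpace X] [PolishSpace X]
    (f : X → X) (hf : Continuous f)
    (hPT : ∃ x : X, Dense (mapOrbit f x))
    (hnonmin : ¬ ∀ x : X, Dense (mapOrbit f x))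
    (hM : Dense {x : X | IsMinimalPoint f x}) :
    ∃ ε > 0, ∀ x : X, ∀ δ > 0, ∃ y ∈ Metric.ball x δ,
      ∃ n : ℕ, dist (f^[n] x) (f^[n] y) > ε := by
  obtain ⟨t, ht⟩ := hPT
  have hX : Nonempty X := ⟨t⟩
  -- first minimal set
  obtain ⟨q₁, hq₁⟩ := hM.nonempty
  simp only [Set.mem_setOf_eq] at hq₁
  set M₁ := closure (mapOrbit f q₁) with hM₁def
  have hq₁M₁ : q₁ ∈ M₁ := subset_closure (mem_mapOrbit f q₁ 0)
  have hM₁ne : M₁ ≠ Set.univ := by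
    intro h
    apply hnonmin
    intro z
    have hz : z ∈ M₁ := h ▸ Set.mem_univ z
    have h2 := hq₁.2 z hz
    exact dense_iff_closure_eq.mpr (h2.trans h)
  have hcompl : (M₁ᶜ).Nonempty := by
    rw [Set.nonempty_compl]; exact hM₁ne
  obtain ⟨q₂, hq₂min, hq₂mem⟩ :=
    hM.exists_mem_open (isClosed_closure.isOpen_compl) hcompl
  simp only [Set.mem_setOf_eq] at hq₂min
  set M₂ := closure (mapOrbit f q₂) with hM₂def
  have hq₂M₂ : q₂ ∈ M₂ := subset_closure (mem_mapOrbit f q₂ 0)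
  have hdisj : ∀ z ∈ M₁, z ∉ M₂ := by
    intro z h1 h2
    have e1 := hq₁.2 z h1
    have e2 := hq₂min.2 z h2
    have hMM : M₁ = M₂ := e1.symm.trans e2
    have : q₂ ∈ M₁ := by rw [hMM]; exact hq₂M₂
    exact hq₂mem this
  have hM₂closed : IsClosed M₂ := isClosed_closure
  have hpos : ∀ z ∈ M₁, 0 < infDist z M₂ := fun z hz =>
    (hM₂closed.notMem_iff_infDist_pos ⟨q₂, hq₂M₂⟩).mp (hdisj z hz)
  obtain ⟨a₀, ha₀M, ha₀min⟩ :=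
    hq₁.1.exists_isMinOn ⟨q₁, hq₁M₁⟩ (continuous_infDist_pt M₂).continuousOn
  set c := infDist a₀ M₂ with hcdef
  have hc : 0 < c := hpos a₀ ha₀M
  have hsep : ∀ z : X, c / 2 ≤ infDist z M₁ ∨ c / 2 ≤ infDist z M₂ := by
    intro z
    by_contra hcon
    push_neg at hcon
    obtain ⟨b, hbM, hb⟩ := hq₁.1.exists_infDist_eq_dist ⟨q₁, hq₁M₁⟩ z
    have h1 : c ≤ infDist b M₂ := ha₀min hbM
    have h2 : infDist b M₂ ≤ infDist z M₂ + dist b z := infDist_le_infDist_add_dist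
    rw [dist_comm] at h2
    linarith [hcon.1, hcon.2]
  have hε : (0:ℝ) < c / 16 := by linarith
  refine ⟨c / 8, by linarith, ?_⟩
  intro x δ hδ
  set δ₀ := min δ (c / 16) with hδ₀def
  have hδ₀pos : 0 < δ₀ := lt_min hδ hε
  have hδ₀ε : δ₀ ≤ c / 16 := min_le_right _ _
  obtain ⟨p, hpmin, hpx⟩ := hM.exists_dist_lt x hδ₀pos
  simp only [Set.mem_setOf_eq] at hpmin
  have key : ∃ y, dist y x < δ₀ ∧ ∃ n : ℕ, 2 * (c / 16) < dist (f^[n] x) (f^[n] y) := by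
    rcases hsep x with hW | hW
    · exact key_sep hf ht hq₁ hpmin hε hδ₀pos hδ₀ε
        (by show 8 * (c / 16) ≤ infDist x M₁; linarith) hpx
    · exact key_sep hf ht hq₂min hpmin hε hδ₀pos hδ₀ε
        (by show 8 * (c / 16) ≤ infDist x M₂; linarith) hpx
  obtain ⟨y, hyx, n, hny⟩ := key
  refine ⟨y, mem_ball.mpr (lt_of_lt_of_le hyx (min_le_left _ _)), n, ?_⟩
  have : 2 * (c / 16) = c / 8 := by ring
  linarith
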